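/- Define the map a(t) = √(1-t²) / (ln m + ln π - ln t)^{1/2} for t ∈ [(1-α₀)(ln m)^{-1/2}, (1+α₀)(ln m)^{-1/2}] with α₀ > 0 small. Then for m sufficiently large, a is a contraction on this interval: |a(t₁) - a(t₂)| ≤ (C/ln m)|t₁ - t₂| for a constant C independent of m, and hence a has a unique fixed point t_m in the interval, satisfying t_m = (1 + o(1))(ln m)^{-1/2}. -/

import Mathlib

set_option maxHeartbeats 1000000
set_option maxRecDepth 10000
open Real

/-- The map whose fixed point determines the height parameter `t`. -/
noncomputable def aMap (m : ℕ) (t : ℝ) : ℝ :=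
  Real.sqrt (1 - t ^ 2) / Real.sqrt (Real.log m + Real.log Real.pi - Real.log t)

/-- The interval `[(1-α₀)(ln m)^{-1/2}, (1+α₀)(ln m)^{-1/2}]`. -/
noncomputable def tInterval (α₀ : ℝ) (m : ℕ) : Set ℝ :=
  Set.Icc ((1 - α₀) * (Real.log m) ^ (-(1 / 2) : ℝ))
    ((1 + α₀) * (Real.log m) ^ (-(1 / 2) : ℝ))

lemma abs_sqrt_sub_sqrt {a b : ℝ} (ha : 0 ≤ a) (hb : 0 ≤ b) (h : 0 < √a + √b) :
    |√a - √b| = |a - b| / (√a + √b) := by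
  have h1 : (√a - √b) * (√a + √b) = a - b := by
    have := Real.sq_sqrt ha; have := Real.sq_sqrt hb; nlinarith
  rw [eq_div_iff h.ne', ← h1, abs_mul, abs_of_pos h]

lemma abs_log_sub_log {a b c : ℝ} (hc : 0 < c) (ha : c ≤ a) (hb : c ≤ b) :
    |Real.log a - Real.log b| ≤ |a - b| / c := by
  wlog hab : b ≤ a generalizing a b
  · rw [abs_sub_comm, abs_sub_comm a b]; exact this hb ha (le_of_not_ge hab)
  have hb0 : 0 < b := lt_of_lt_of_le hc hb
  have ha0 : 0 < a := lt_of_lt_of_le hc ha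
  have h1 : Real.log a - Real.log b = Real.log (a / b) := (Real.log_div ha0.ne' hb0.ne').symm
  have h2 : Real.log (a / b) ≤ a / b - 1 := Real.log_le_sub_one_of_pos (by positivity)
  have h3 : 0 ≤ Real.log a - Real.log b := by
    rw [h1]; exact Real.log_nonneg (by rw [le_div_iff₀ hb0]; linarith)
  rw [abs_of_nonneg h3, abs_of_nonneg (by linarith)]
  have h4 : a / b - 1 = (a - b) / b := by field_simp
  have h5 : (a - b) / b ≤ (a - b) / c := by gcongr
  calc Real.log a - Real.log b ≤ (a - b) / b := by rw [h1, ← h4]; exact h2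
    _ ≤ (a - b) / c := h5

noncomputable def AA (x t : ℝ) : ℝ :=
  Real.sqrt (1 - t ^ 2) / Real.sqrt (x + Real.log Real.pi - Real.log t)

lemma tfacts {x t : ℝ} (hx : 100 ≤ x) (h1 : 1/(2*√x) ≤ t) (h2 : t ≤ 3/(2*√x)) :
    0 < t ∧ t ≤ 3/20 ∧ 3/4 ≤ 1 - t^2 ∧ x ≤ x + Real.log π - Real.log t ∧
    x + Real.log π - Real.log t ≤ 2*x ∧ -(Real.log 2 + Real.log x / 2) ≤ Real.log t ∧
    Real.log t ≤ 0 := by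
  have hx0 : (0:ℝ) < x := by linarith
  have hs : (10:ℝ) ≤ √x := (Real.le_sqrt (by norm_num) hx0.le).mpr (by nlinarith)
  have hsx : √x * √x = x := Real.mul_self_sqrt hx0.le
  have ht0 : 0 < t := lt_of_lt_of_le (by positivity) h1
  have ht320 : t ≤ 3/20 := by
    refine h2.trans ?_
    rw [div_le_div_iff₀ (by positivity) (by norm_num)]
    nlinarith
  have hN : 3/4 ≤ 1 - t^2 := by nlinarith
  have hlogpi0 : 0 ≤ Real.log π := Real.log_nonneg (by linarith [Real.pi_gt_three])
  have hlogpi3 : Real.log π ≤ 3 := by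
    have := Real.log_le_sub_one_of_pos Real.pi_pos
    linarith [Real.pi_le_four]
  have hlogt0 : Real.log t ≤ 0 := Real.log_nonpos ht0.le (by linarith)
  have hloglo : Real.log (1/(2*√x)) = -(Real.log 2 + Real.log x / 2) := by
    rw [one_div, Real.log_inv, Real.log_mul (by norm_num) (by positivity),
      Real.log_sqrt hx0.le]
  have hlogt1 : -(Real.log 2 + Real.log x / 2) ≤ Real.log t := by
    rw [← hloglo]; exact Real.log_le_log (by positivity) h1
  have hlog2 : Real.log 2 ≤ 1 := by
    have := Real.log_le_sub_one_of_pos (by norm_num : (0:ℝ) < 2); linarith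
  have hlogx : Real.log x ≤ x - 1 := Real.log_le_sub_one_of_pos hx0
  refine ⟨ht0, ht320, hN, by linarith, by linarith, hlogt1, hlogt0⟩

lemma AA_mem {x t : ℝ} (hx : 100 ≤ x) (h1 : 1/(2*√x) ≤ t) (h2 : t ≤ 3/(2*√x)) :
    1/(2*√x) ≤ AA x t ∧ AA x t ≤ 3/(2*√x) := by
  obtain ⟨ht0, ht320, hN, hD1, hD2, hlt1, hlt2⟩ := tfacts hx h1 h2
  have hx0 : (0:ℝ) < x := by linarith
  have hs : (10:ℝ) ≤ √x := (Real.le_sqrt (by norm_num) hx0.le).mpr (by nlinarith)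
  have hsx : √x * √x = x := Real.mul_self_sqrt hx0.le
  have hD0 : (0:ℝ) < x + Real.log π - Real.log t := by linarith
  have hA0 : 0 ≤ AA x t := by unfold AA; positivity
  have hA2 : AA x t ^ 2 = (1 - t^2) / (x + Real.log π - Real.log t) := by
    unfold AA
    rw [div_pow, Real.sq_sqrt (by linarith), Real.sq_sqrt hD0.le]
  have hA2lo : 1/(4*x) ≤ AA x t ^ 2 := by
    rw [hA2]
    calc 1/(4*x) ≤ (3/4)/(2*x) := by rw [div_le_div_iff₀ (by positivity) (by positivity)]; nlinarith
      _ ≤ (1 - t^2) / (x + Real.log π - Real.log t) := div_le_div₀ (by linarith) hN hD0 hD2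
  have hA2hi : AA x t ^ 2 ≤ 9/(4*x) := by
    rw [hA2]
    calc (1 - t^2) / (x + Real.log π - Real.log t) ≤ 1/x := div_le_div₀ (by norm_num) (by nlinarith) hx0 hD1
      _ ≤ 9/(4*x) := by rw [div_le_div_iff₀ hx0 (by positivity)]; nlinarith
  have hsq : (√x)^2 = x := Real.sq_sqrt hx0.le
  have e1 : (1/(2*√x))^2 = 1/(4*x) := by rw [div_pow, mul_pow, hsq]; norm_num
  have e2 : (3/(2*√x))^2 = 9/(4*x) := by rw [div_pow, mul_pow, hsq]; norm_num
  constructor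
  · calc 1/(2*√x) = √((1/(2*√x))^2) := (Real.sqrt_sq (by positivity)).symm
      _ = √(1/(4*x)) := by rw [e1]
      _ ≤ √(AA x t^2) := Real.sqrt_le_sqrt hA2lo
      _ = AA x t := Real.sqrt_sq hA0
  · calc AA x t = √(AA x t^2) := (Real.sqrt_sq hA0).symm
      _ ≤ √(9/(4*x)) := Real.sqrt_le_sqrt hA2hi
      _ = √((3/(2*√x))^2) := by rw [e2]
      _ = 3/(2*√x) := Real.sqrt_sq (by positivity)

lemma AA_contr {x t₁ t₂ : ℝ} (hx : 100 ≤ x)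
    (h11 : 1/(2*√x) ≤ t₁) (h12 : t₁ ≤ 3/(2*√x))
    (h21 : 1/(2*√x) ≤ t₂) (h22 : t₂ ≤ 3/(2*√x)) :
    |AA x t₁ - AA x t₂| ≤ 4/x * |t₁ - t₂| := by
  obtain ⟨ht10, ht1320, hN1, hD11, hD12, _, _⟩ := tfacts hx h11 h12
  obtain ⟨ht20, ht2320, hN2, hD21, hD22, _, _⟩ := tfacts hx h21 h22
  have hx0 : (0:ℝ) < x := by linarith
  have hs : (10:ℝ) ≤ √x := (Real.le_sqrt (by norm_num) hx0.le).mpr (by nlinarith)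
  have hsx : √x * √x = x := Real.mul_self_sqrt hx0.le
  set f₁ := √(1 - t₁^2) with hf₁d
  set f₂ := √(1 - t₂^2) with hf₂d
  set g₁ := √(x + Real.log π - Real.log t₁) with hg₁d
  set g₂ := √(x + Real.log π - Real.log t₂) with hg₂d
  have hf1lo : 3/4 ≤ f₁ := (Real.le_sqrt (by norm_num) (by linarith)).mpr (by nlinarith)
  have hf2lo : 3/4 ≤ f₂ := (Real.le_sqrt (by norm_num) (by linarith)).mpr (by nlinarith)
  have hf1hi : f₁ ≤ 1 := Real.sqrt_le_one.mpr (by nlinarith)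
  have hf2hi : f₂ ≤ 1 := Real.sqrt_le_one.mpr (by nlinarith)
  have hg1lo : √x ≤ g₁ := Real.sqrt_le_sqrt (by linarith)
  have hg2lo : √x ≤ g₂ := Real.sqrt_le_sqrt (by linarith)
  have hg10 : 0 < g₁ := lt_of_lt_of_le (by linarith) hg1lo
  have hg20 : 0 < g₂ := lt_of_lt_of_le (by linarith) hg2lo
  -- bound on |f₁ - f₂|
  have hfd : |f₁ - f₂| ≤ 2/√x * |t₁ - t₂| := by
    rw [hf₁d, hf₂d, abs_sqrt_sub_sqrt (by nlinarith) (by nlinarith) (by rw [← hf₁d, ← hf₂d]; linarith)]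
    rw [← hf₁d, ← hf₂d]
    have hnum : |1 - t₁^2 - (1 - t₂^2)| ≤ 3/√x * |t₁ - t₂| := by
      have : 1 - t₁^2 - (1 - t₂^2) = (t₂ - t₁) * (t₂ + t₁) := by ring
      rw [this, abs_mul, abs_sub_comm t₂ t₁, abs_of_pos (show (0:ℝ) < t₂ + t₁ by linarith)]
      have ht12 : t₂ + t₁ ≤ 3/√x := by
        have : 3/(2*√x) + 3/(2*√x) = 3/√x := by ring
        linarith
      calc |t₁ - t₂| * (t₂ + t₁) ≤ |t₁ - t₂| * (3/√x) := by
            exact mul_le_mul_of_nonneg_left ht12 (abs_nonneg _)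
        _ = 3/√x * |t₁ - t₂| := by ring
    calc |1 - t₁^2 - (1 - t₂^2)| / (f₁ + f₂) ≤ (3/√x * |t₁ - t₂|) / (3/2) :=
          div_le_div₀ (by positivity) hnum (by norm_num) (by linarith)
      _ = 2/√x * |t₁ - t₂| := by ring
  -- bound on |g₁ - g₂|
  have hgd : |g₁ - g₂| ≤ |t₁ - t₂| := by
    rw [hg₁d, hg₂d, abs_sqrt_sub_sqrt (by linarith) (by linarith) (by rw [← hg₁d, ← hg₂d]; linarith)]
    rw [← hg₁d, ← hg₂d]
    have hnum : |x + Real.log π - Real.log t₁ - (x + Real.log π - Real.log t₂)| ≤ 2*√x * |t₁ - t₂| := by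
      have he : x + Real.log π - Real.log t₁ - (x + Real.log π - Real.log t₂)
          = Real.log t₂ - Real.log t₁ := by ring
      rw [he]
      have := abs_log_sub_log (c := 1/(2*√x)) (by positivity) h21 h11
      calc |Real.log t₂ - Real.log t₁| ≤ |t₂ - t₁| / (1/(2*√x)) := this
        _ = 2*√x * |t₁ - t₂| := by rw [abs_sub_comm]; field_simp
    calc |x + Real.log π - Real.log t₁ - (x + Real.log π - Real.log t₂)| / (g₁ + g₂)
        ≤ (2*√x * |t₁ - t₂|) / (2*√x) := div_le_div₀ (by positivity) hnum (by positivity) (by linarith)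
      _ = |t₁ - t₂| := by field_simp
  -- decomposition
  have hdec : AA x t₁ - AA x t₂ = (f₁ - f₂)/g₁ + f₂ * (g₂ - g₁)/(g₁*g₂) := by
    unfold AA
    rw [← hf₁d, ← hf₂d, ← hg₁d, ← hg₂d]
    field_simp
    ring
  rw [hdec]
  have hb1 : |(f₁ - f₂)/g₁| ≤ 2/x * |t₁ - t₂| := by
    rw [abs_div, abs_of_pos hg10]
    calc |f₁ - f₂| / g₁ ≤ (2/√x * |t₁ - t₂|) / √x :=
          div_le_div₀ (by positivity) hfd (by linarith) hg1lo
      _ = 2/(√x*√x) * |t₁ - t₂| := by ring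
      _ = 2/x * |t₁ - t₂| := by rw [hsx]
  have hb2 : |f₂ * (g₂ - g₁)/(g₁*g₂)| ≤ 1/x * |t₁ - t₂| := by
    rw [abs_div, abs_mul, abs_of_pos (by positivity : (0:ℝ) < g₁*g₂)]
    have hnum2 : |f₂| * |g₂ - g₁| ≤ 1 * |t₁ - t₂| := by
      rw [abs_of_pos (by linarith : (0:ℝ) < f₂), abs_sub_comm]
      exact mul_le_mul hf2hi hgd (abs_nonneg _) (by norm_num)
    calc |f₂| * |g₂ - g₁| / (g₁ * g₂) ≤ (1 * |t₁ - t₂|) / (√x * √x) := by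
          apply div_le_div₀ (by positivity) hnum2 (by nlinarith)
          exact mul_le_mul hg1lo hg2lo (by linarith) hg10.le
      _ = 1/x * |t₁ - t₂| := by rw [hsx]; ring
  calc |(f₁ - f₂)/g₁ + f₂ * (g₂ - g₁)/(g₁*g₂)| ≤ |(f₁ - f₂)/g₁| + |f₂ * (g₂ - g₁)/(g₁*g₂)| := abs_add_le _ _
    _ ≤ 2/x * |t₁ - t₂| + 1/x * |t₁ - t₂| := add_le_add hb1 hb2
    _ = 3/x * |t₁ - t₂| := by ring
    _ ≤ 4/x * |t₁ - t₂| := by gcongr <;> norm_num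

open Filter in
lemma AA_exists {x : ℝ} (hx : 100 ≤ x) :
    ∃ t ∈ Set.Icc (1/(2*√x)) (3/(2*√x)), AA x t = t := by
  have hx0 : (0:ℝ) < x := by linarith
  have hs0 : (0:ℝ) < √x := Real.sqrt_pos.mpr hx0
  have hlohi : 1/(2*√x) ≤ 3/(2*√x) := by gcongr <;> norm_num
  have hlip : LipschitzOnWith (⟨4/x, by positivity⟩ : NNReal) (AA x) (Set.Icc (1/(2*√x)) (3/(2*√x))) := by
    refine lipschitzOnWith_iff_dist_le_mul.mpr ?_
    intro a ha b hb
    rw [Real.dist_eq, Real.dist_eq]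
    exact AA_contr hx ha.1 ha.2 hb.1 hb.2
  have hcont : ContinuousOn (fun t => AA x t - t) (Set.Icc (1/(2*√x)) (3/(2*√x))) :=
    hlip.continuousOn.sub continuousOn_id
  have hlo := AA_mem hx (le_refl (1/(2*√x))) hlohi
  have hhi := AA_mem hx hlohi (le_refl (3/(2*√x)))
  have key := intermediate_value_Icc' hlohi hcont
  have h0 : (0:ℝ) ∈ Set.Icc (AA x (3/(2*√x)) - 3/(2*√x)) (AA x (1/(2*√x)) - 1/(2*√x)) :=
    ⟨by linarith [hhi.2], by linarith [hlo.1]⟩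
  obtain ⟨t, htm, hteq⟩ := key h0
  exact ⟨t, htm, by simpa [sub_eq_zero] using hteq⟩

lemma aMap_eq (m : ℕ) (t : ℝ) : aMap m t = AA (Real.log m) t := rfl

lemma tInterval_eq (m : ℕ) (h : 0 ≤ Real.log m) :
    tInterval (1/2) m = Set.Icc (1/(2*√(Real.log m))) (3/(2*√(Real.log m))) := by
  unfold tInterval
  have e1 : (1 - 1/2 : ℝ) * (√(Real.log m))⁻¹ = 1/(2*√(Real.log m)) := by
    rw [one_div (2*√(Real.log (m:ℕ))), mul_inv]; norm_num
  have e2 : (1 + 1/2 : ℝ) * (√(Real.log m))⁻¹ = 3/(2*√(Real.log m)) := by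
    rw [div_eq_mul_inv (3:ℝ), mul_inv]; ring
  rw [Real.rpow_neg h, ← Real.sqrt_eq_rpow, e1, e2]

open Classical in
noncomputable def tmSeq (m : ℕ) : ℝ :=
  if h : ∃ t ∈ tInterval (1/2) m, aMap m t = t then h.choose else 0

lemma log_big {m : ℕ} (hm : 2^150 ≤ m) : 100 ≤ Real.log m := by
  have h1 : ((2:ℝ))^150 ≤ (m:ℝ) := by exact_mod_cast Nat.cast_le.mpr hm
  have h2 : Real.log ((2:ℝ)^150) ≤ Real.log m := Real.log_le_log (by positivity) h1
  rw [Real.log_pow] at h2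
  have := Real.log_two_gt_d9
  push_cast at h2
  linarith

lemma mainm {m : ℕ} (hm : 2^150 ≤ m) :
    (∀ t₁ ∈ tInterval (1/2) m, ∀ t₂ ∈ tInterval (1/2) m,
      |aMap m t₁ - aMap m t₂| ≤ (4 / Real.log m) * |t₁ - t₂|) ∧
    tmSeq m ∈ tInterval (1/2) m ∧ aMap m (tmSeq m) = tmSeq m ∧
    (∀ t ∈ tInterval (1/2) m, aMap m t = t → t = tmSeq m) := by
  have hx : 100 ≤ Real.log m := log_big hm
  have hI : tInterval (1/2) m = Set.Icc (1/(2*√(Real.log m))) (3/(2*√(Real.log m))) :=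
    tInterval_eq m (by linarith)
  have hcontr : ∀ t₁ ∈ tInterval (1/2) m, ∀ t₂ ∈ tInterval (1/2) m,
      |aMap m t₁ - aMap m t₂| ≤ (4 / Real.log m) * |t₁ - t₂| := by
    intro t₁ ht₁ t₂ ht₂
    rw [hI] at ht₁ ht₂
    rw [aMap_eq, aMap_eq]
    exact AA_contr hx ht₁.1 ht₁.2 ht₂.1 ht₂.2
  have hex : ∃ t ∈ tInterval (1/2) m, aMap m t = t := by
    rw [hI]
    obtain ⟨t, htm, hteq⟩ := AA_exists hx
    exact ⟨t, htm, by rw [aMap_eq]; exact hteq⟩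
  have htm : tmSeq m ∈ tInterval (1/2) m ∧ aMap m (tmSeq m) = tmSeq m := by
    unfold tmSeq
    rw [dif_pos hex]
    exact ⟨hex.choose_spec.1, hex.choose_spec.2⟩
  refine ⟨hcontr, htm.1, htm.2, ?_⟩
  intro t ht hfix
  have h := hcontr t ht (tmSeq m) htm.1
  rw [hfix, htm.2] at h
  have h4 : 4 / Real.log m ≤ 4/100 := by
    rw [div_le_div_iff₀ (by linarith) (by norm_num)]; linarith
  have h0 := abs_nonneg (t - tmSeq m)
  have hz : |t - tmSeq m| ≤ 0 := by
    linarith [mul_le_mul_of_nonneg_right h4 h0]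
  exact sub_eq_zero.mp (abs_eq_zero.mp (le_antisymm hz h0))

open Filter
theorem stmt18 :
    ∃ α₀ > (0 : ℝ), ∃ C > (0 : ℝ), ∃ m₀ : ℕ, ∃ tm : ℕ → ℝ,
      (∀ m : ℕ, m₀ ≤ m →
        (∀ t₁ ∈ tInterval α₀ m, ∀ t₂ ∈ tInterval α₀ m,
          |aMap m t₁ - aMap m t₂| ≤ (C / Real.log m) * |t₁ - t₂|) ∧
        tm m ∈ tInterval α₀ m ∧ aMap m (tm m) = tm m ∧
        (∀ t ∈ tInterval α₀ m, aMap m t = t → t = tm m)) ∧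
      Filter.Tendsto (fun m : ℕ => tm m * Real.sqrt (Real.log m)) Filter.atTop (nhds 1) := by
  refine ⟨1/2, by norm_num, 4, by norm_num, 2^150, tmSeq, fun m hm => mainm hm, ?_⟩
  have hlogtop : Tendsto (fun m : ℕ => Real.log m) atTop atTop :=
    Real.tendsto_log_atTop.comp tendsto_natCast_atTop_atTop
  have hev : ∀ᶠ m : ℕ in atTop, 2^150 ≤ m := eventually_ge_atTop _
  have hfacts : ∀ᶠ m : ℕ in atTop, 100 ≤ Real.log m ∧ 1/(2*√(Real.log m)) ≤ tmSeq m ∧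
      tmSeq m ≤ 3/(2*√(Real.log m)) ∧ aMap m (tmSeq m) = tmSeq m := by
    filter_upwards [hev] with m hm
    have hx := log_big hm
    obtain ⟨_, hmem, hfix, _⟩ := mainm hm
    rw [tInterval_eq m (by linarith)] at hmem
    exact ⟨hx, hmem.1, hmem.2, hfix⟩
  -- tmSeq m ^ 2 → 0
  have h1 : Tendsto (fun m : ℕ => (tmSeq m)^2) atTop (nhds 0) := by
    apply squeeze_zero_norm' (a := fun m : ℕ => 9/4 * (Real.log m)⁻¹)
    · filter_upwards [hfacts] with m hm
      obtain ⟨hx, hlo, hhi, _⟩ := hm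
      have hx0 : (0:ℝ) < Real.log m := by linarith
      have ht0 : 0 ≤ tmSeq m := le_trans (by positivity) hlo
      rw [Real.norm_eq_abs, abs_of_nonneg (sq_nonneg _)]
      calc tmSeq m^2 ≤ (3/(2*√(Real.log m)))^2 := pow_le_pow_left₀ ht0 hhi 2
        _ = 9/4 * (Real.log m)⁻¹ := by
            rw [div_pow, mul_pow, Real.sq_sqrt hx0.le]; ring
    · simpa using (tendsto_inv_atTop_zero.comp hlogtop).const_mul (9/4:ℝ)
  -- (log π - log tmSeq m)/log m → 0
  have hll : Tendsto (fun m : ℕ => Real.log (Real.log m) / Real.log m) atTop (nhds 0) := by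
    simpa [Function.comp_def] using
      (Real.isLittleO_log_id_atTop.tendsto_div_nhds_zero).comp hlogtop
  have hb0 : Tendsto (fun m : ℕ => 3 * (Real.log m)⁻¹ +
      1/2 * (Real.log (Real.log m)/Real.log m)) atTop (nhds 0) := by
    have ha := (tendsto_inv_atTop_zero.comp hlogtop).const_mul (3:ℝ)
    have hb := hll.const_mul (1/2:ℝ)
    simpa using ha.add hb
  have hε : Tendsto (fun m : ℕ => (Real.log π - Real.log (tmSeq m)) / Real.log m)
      atTop (nhds 0) := by
    apply squeeze_zero_norm' _ hb0
    filter_upwards [hfacts] with m hm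
    obtain ⟨hx, hlo, hhi, _⟩ := hm
    have hx0 : (0:ℝ) < Real.log m := by linarith
    obtain ⟨ht0, _, _, _, _, hlt1, hlt2⟩ := tfacts hx hlo hhi
    have hlogpi : Real.log π ≤ 2 := by
      have h1 : Real.log π ≤ Real.log 4 := Real.log_le_log Real.pi_pos Real.pi_le_four
      have h2 : Real.log 4 = 2 * Real.log 2 := by
        rw [show (4:ℝ) = 2^2 by norm_num, Real.log_pow]; push_cast; ring
      have := Real.log_two_lt_d9
      linarith
    have hlog2 : Real.log 2 ≤ 1 := by
      have := Real.log_le_sub_one_of_pos (by norm_num : (0:ℝ) < 2); linarith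
    rw [Real.norm_eq_abs, abs_div, abs_of_pos hx0,
      abs_of_nonneg (by linarith : (0:ℝ) ≤ Real.log π - Real.log (tmSeq m))]
    have he : 3 * (Real.log m)⁻¹ + 1/2 * (Real.log (Real.log m)/Real.log m)
        = (3 + Real.log (Real.log m)/2) / Real.log m := by field_simp
    rw [he]
    gcongr
    linarith
  -- log m / D → 1
  have h3 : Tendsto (fun m : ℕ => Real.log m /
      (Real.log m + Real.log π - Real.log (tmSeq m))) atTop (nhds 1) := by
    have hd : Tendsto (fun m : ℕ => 1 + (Real.log π - Real.log (tmSeq m))/Real.log m)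
        atTop (nhds 1) := by simpa using tendsto_const_nhds.add hε
    have hinv := hd.inv₀ one_ne_zero
    rw [inv_one] at hinv
    apply hinv.congr'
    filter_upwards [hfacts] with m hm
    obtain ⟨hx, hlo, hhi, _⟩ := hm
    have hx0 : (0:ℝ) < Real.log m := by linarith
    obtain ⟨_, _, _, hD1, _, _, _⟩ := tfacts hx hlo hhi
    have hD0 : (0:ℝ) < Real.log m + Real.log π - Real.log (tmSeq m) := by linarith
    have he : 1 + (Real.log π - Real.log (tmSeq m))/Real.log m
        = (Real.log m + Real.log π - Real.log (tmSeq m))/Real.log m := by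
      field_simp
      ring
    rw [he, inv_div]
  -- product → 1
  have h4 : Tendsto (fun m : ℕ => (1 - tmSeq m^2) * (Real.log m /
      (Real.log m + Real.log π - Real.log (tmSeq m)))) atTop (nhds 1) := by
    simpa using (tendsto_const_nhds.sub h1).mul h3
  have h5 : Tendsto (fun m : ℕ => √((1 - tmSeq m^2) * (Real.log m /
      (Real.log m + Real.log π - Real.log (tmSeq m))))) atTop (nhds 1) := by
    have := (Real.continuous_sqrt.tendsto 1).comp h4
    simpa [Function.comp_def] using this
  apply h5.congr'
  filter_upwards [hfacts] with m hm
  obtain ⟨hx, hlo, hhi, hfix⟩ := hm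
  have hx0 : (0:ℝ) < Real.log m := by linarith
  obtain ⟨_, _, hN, hD1, _, _, _⟩ := tfacts hx hlo hhi
  have hN0 : (0:ℝ) ≤ 1 - tmSeq m^2 := by linarith
  have hfix' : √(1 - tmSeq m^2)/√(Real.log m + Real.log π - Real.log (tmSeq m))
      = tmSeq m := hfix
  calc √((1 - tmSeq m^2) * (Real.log m /
        (Real.log m + Real.log π - Real.log (tmSeq m))))
      = √(1 - tmSeq m^2) * √(Real.log m /
        (Real.log m + Real.log π - Real.log (tmSeq m))) := Real.sqrt_mul hN0 _
    _ = √(1 - tmSeq m^2) * (√(Real.log m) /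
        √(Real.log m + Real.log π - Real.log (tmSeq m))) := by
        rw [Real.sqrt_div hx0.le]
    _ = (√(1 - tmSeq m^2)/√(Real.log m + Real.log π - Real.log (tmSeq m)))
        * √(Real.log m) := by ring
    _ = tmSeq m * √(Real.log m) := by rw [hfix']
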